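/- For every m ∈ B_n°, the function ψ_{m,n} vanishes on the boundary of B_n: ψ_{m,n}(k) = 0 for all k ∈ ∂B_n. -/

import Mathlib

open Finset Real Complex

/-- The lattice `A₂ = {k ∈ ℤ³ : k₁+k₂+k₃ = 0}`. -/
def latA2 : Set (Fin 3 → ℤ) := {k | k 0 + k 1 + k 2 = 0}

/-- `B_n = {k ∈ A₂ : k₁ ≥ 0, k₂ ≥ 0, k₃ ≥ −n}`. -/
def Bn (n : ℕ) : Set (Fin 3 → ℤ) :=
  {k | k 0 + k 1 + k 2 = 0 ∧ 0 ≤ k 0 ∧ 0 ≤ k 1 ∧ -(n : ℤ) ≤ k 2}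

/-- The interior `B_n° = {k ∈ A₂ : k₁ ≥ 1, k₂ ≥ 1, k₃ ≥ 1−n}`. -/
def BnO (n : ℕ) : Set (Fin 3 → ℤ) :=
  {k | k 0 + k 1 + k 2 = 0 ∧ 1 ≤ k 0 ∧ 1 ≤ k 1 ∧ 1 - (n : ℤ) ≤ k 2}

/-- The function `ψ_{m,n}(k) = (1/(√6·n))·Σ_{σ∈S₃} sgn(σ)·exp(sgn(σ)·(2πi/(3n))·⟨m, σk⟩)`. -/
noncomputable def psi (n : ℕ) (m k : Fin 3 → ℤ) : ℂ :=
  (1 / (Real.sqrt 6 * n)) * ∑ σ : Equiv.Perm (Fin 3),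
    ((Equiv.Perm.sign σ : ℤ) : ℂ) *
      Complex.exp (((Equiv.Perm.sign σ : ℤ) : ℂ) * (2 * Real.pi * Complex.I / (3 * n)) *
        ((∑ i, m i * k (σ⁻¹ i) : ℤ) : ℂ))

/-- The eigenvalue `λ_{m,n}`. -/
noncomputable def lamEig (n : ℕ) (m : Fin 3 → ℤ) : ℝ :=
  (1 / 3) * (Real.cos (2 * Real.pi * ((m 0 - m 1 : ℤ) : ℝ) / (3 * n)) +
    Real.cos (2 * Real.pi * ((m 1 - m 2 : ℤ) : ℝ) / (3 * n)) +
    Real.cos (2 * Real.pi * ((m 2 - m 0 : ℤ) : ℝ) / (3 * n)))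

/-- Rewrite the inner product sum via reindexing by `σ`. -/
lemma S_eq (m k : Fin 3 → ℤ) (σ : Equiv.Perm (Fin 3)) :
    (∑ i, m i * k (σ⁻¹ i)) = m (σ 0) * k 0 + m (σ 1) * k 1 + m (σ 2) * k 2 := by
  rw [← Equiv.sum_comp σ (fun i => m i * k (σ⁻¹ i)), Fin.sum_univ_three]
  simp

/-- Sum of `m` over a permuted index set. -/
lemma m_perm_sum (m : Fin 3 → ℤ) (σ : Equiv.Perm (Fin 3)) :
    m (σ 0) + m (σ 1) + m (σ 2) = m 0 + m 1 + m 2 := by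
  have := Equiv.sum_comp σ m
  rw [Fin.sum_univ_three, Fin.sum_univ_three] at this
  exact this

/-- Key cancellation lemma: if composing with a fixed transposition preserves each
exponential factor, then the signed sum vanishes. -/
lemma key_sum_zero (c : ℂ) (S : Equiv.Perm (Fin 3) → ℤ) (a b : Fin 3) (hab : a ≠ b)
    (h : ∀ σ : Equiv.Perm (Fin 3),
      Complex.exp (((Equiv.Perm.sign (σ * Equiv.swap a b) : ℤ) : ℂ) * c *
          ((S (σ * Equiv.swap a b) : ℤ) : ℂ))
        = Complex.exp (((Equiv.Perm.sign σ : ℤ) : ℂ) * c * ((S σ : ℤ) : ℂ))) :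
    ∑ σ : Equiv.Perm (Fin 3),
      ((Equiv.Perm.sign σ : ℤ) : ℂ) *
        Complex.exp (((Equiv.Perm.sign σ : ℤ) : ℂ) * c * ((S σ : ℤ) : ℂ)) = 0 := by
  apply Finset.sum_involution (fun σ _ => σ * Equiv.swap a b)
  · intro σ _
    have hs : ((Equiv.Perm.sign (σ * Equiv.swap a b) : ℤ) : ℂ)
        = -((Equiv.Perm.sign σ : ℤ) : ℂ) := by
      rw [Equiv.Perm.sign_mul, Equiv.Perm.sign_swap hab]
      push_cast
      ring
    rw [h σ, hs]
    ring
  · intro σ _ _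
    intro heq
    have h1 : Equiv.swap a b = 1 := mul_left_cancel (heq.trans (mul_one σ).symm)
    have hba : b = a := by rw [← Equiv.swap_apply_left a b, h1]; rfl
    exact hab hba.symm
  · intro σ _; exact Finset.mem_univ _
  · intro σ _
    rw [mul_assoc, Equiv.swap_mul_self, mul_one]

/-- For every `m ∈ B_n°`, the function `ψ_{m,n}` vanishes on the
boundary `∂B_n = B_n \ B_n°`. -/
theorem psi_vanishes_on_boundary (n : ℕ) (hn : 2 ≤ n) (m : Fin 3 → ℤ) (hm : m ∈ BnO n) :
    ∀ k ∈ Bn n \ BnO n, psi n m k = 0 := by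
  rintro k ⟨⟨hsum, h0, h1, h2⟩, hk⟩
  obtain ⟨hmsum, hm0, hm1, hm2⟩ := hm
  have hcase : k 0 = 0 ∨ k 1 = 0 ∨ k 2 = -(n : ℤ) := by
    by_contra h
    push_neg at h
    exact hk ⟨hsum, by omega, by omega, by omega⟩
  have hsgn : ∀ σ : Equiv.Perm (Fin 3),
      ((Equiv.Perm.sign σ : ℤ) : ℂ) = 1 ∨ ((Equiv.Perm.sign σ : ℤ) : ℂ) = -1 := by
    intro σ
    rcases Int.units_eq_one_or (Equiv.Perm.sign σ) with h | h <;> rw [h] <;> simp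
  unfold psi
  rw [mul_eq_zero]
  right
  set c : ℂ := 2 * Real.pi * Complex.I / (3 * n) with hc
  rcases hcase with h | h | h
  · -- k 0 = 0 ; pair with swap 1 2
    apply key_sum_zero c (fun σ => ∑ i, m i * k (σ⁻¹ i)) 1 2 (by decide)
    intro σ
    congr 1
    have e1 : (∑ i, m i * k ((σ * Equiv.swap (1 : Fin 3) 2)⁻¹ i) : ℤ) = -(∑ i, m i * k (σ⁻¹ i) : ℤ) := by
      rw [S_eq, S_eq]
      simp only [Equiv.Perm.mul_apply]
      have s0 : Equiv.swap (1 : Fin 3) 2 0 = 0 := by decide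
      have s1 : Equiv.swap (1 : Fin 3) 2 1 = 2 := by decide
      have s2 : Equiv.swap (1 : Fin 3) 2 2 = 1 := by decide
      rw [s0, s1, s2]
      have hk2 : k 2 = -k 1 := by omega
      rw [h, hk2]; ring
    have hs : ((Equiv.Perm.sign (σ * Equiv.swap (1 : Fin 3) 2) : ℤ) : ℂ)
        = -((Equiv.Perm.sign σ : ℤ) : ℂ) := by
      rw [Equiv.Perm.sign_mul, Equiv.Perm.sign_swap (by decide)]
      push_cast; ring
    rw [e1, hs]
    push_cast
    ring
  · -- k 1 = 0 ; pair with swap 0 2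
    apply key_sum_zero c (fun σ => ∑ i, m i * k (σ⁻¹ i)) 0 2 (by decide)
    intro σ
    congr 1
    have e1 : (∑ i, m i * k ((σ * Equiv.swap (0 : Fin 3) 2)⁻¹ i) : ℤ) = -(∑ i, m i * k (σ⁻¹ i) : ℤ) := by
      rw [S_eq, S_eq]
      simp only [Equiv.Perm.mul_apply]
      have s0 : Equiv.swap (0 : Fin 3) 2 0 = 2 := by decide
      have s1 : Equiv.swap (0 : Fin 3) 2 1 = 1 := by decide
      have s2 : Equiv.swap (0 : Fin 3) 2 2 = 0 := by decide
      rw [s0, s1, s2]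
      have hk2 : k 2 = -k 0 := by omega
      rw [h, hk2]; ring
    have hs : ((Equiv.Perm.sign (σ * Equiv.swap (0 : Fin 3) 2) : ℤ) : ℂ)
        = -((Equiv.Perm.sign σ : ℤ) : ℂ) := by
      rw [Equiv.Perm.sign_mul, Equiv.Perm.sign_swap (by decide)]
      push_cast; ring
    rw [e1, hs]
    push_cast
    ring
  · -- k 2 = -n ; pair with swap 0 1
    apply key_sum_zero c (fun σ => ∑ i, m i * k (σ⁻¹ i)) 0 1 (by decide)
    intro σ
    -- show exponents differ by an integer multiple of 2πi
    have hm3 : m (σ 0) + m (σ 1) = -m (σ 2) := by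
      have := m_perm_sum m σ
      omega
    have e1 : (∑ i, m i * k ((σ * Equiv.swap (0 : Fin 3) 1)⁻¹ i) : ℤ)
        = -(∑ i, m i * k (σ⁻¹ i) : ℤ) - 3 * n * m (σ 2) := by
      rw [S_eq, S_eq]
      simp only [Equiv.Perm.mul_apply]
      have s0 : Equiv.swap (0 : Fin 3) 1 0 = 1 := by decide
      have s1 : Equiv.swap (0 : Fin 3) 1 1 = 0 := by decide
      have s2 : Equiv.swap (0 : Fin 3) 1 2 = 2 := by decide
      rw [s0, s1, s2]
      have hk01 : k 0 + k 1 = n := by omega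
      have : m (σ 1) * k 0 + m (σ 0) * k 1
          = -(m (σ 0) * k 0 + m (σ 1) * k 1) + (m (σ 0) + m (σ 1)) * (k 0 + k 1) := by ring
      rw [this, hk01, hm3, h]
      ring
    have hs : ((Equiv.Perm.sign (σ * Equiv.swap (0 : Fin 3) 1) : ℤ) : ℂ)
        = -((Equiv.Perm.sign σ : ℤ) : ℂ) := by
      rw [Equiv.Perm.sign_mul, Equiv.Perm.sign_swap (by decide)]
      push_cast; ring
    rw [e1, hs]
    set e : ℂ := ((Equiv.Perm.sign σ : ℤ) : ℂ) with he
    have hn0 : (3 * (n : ℂ)) ≠ 0 := by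
      have : (n : ℂ) ≠ 0 := by
        exact_mod_cast Nat.cast_ne_zero.mpr (by omega)
      simp [this]
    have hsplit : -e * c * ((-(∑ i, m i * k (σ⁻¹ i) : ℤ) - 3 * n * m (σ 2) : ℤ) : ℂ)
        = e * c * ((∑ i, m i * k (σ⁻¹ i) : ℤ) : ℂ)
          + ((Equiv.Perm.sign σ : ℤ) * m (σ 2) : ℤ) * (2 * Real.pi * Complex.I) := by
      rw [hc]
      push_cast
      field_simp
      have hn1 : (n : ℂ) ≠ 0 := by exact_mod_cast (by omega : n ≠ 0)
      rw [← he]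
      linear_combination (e * ((m (σ 2) : ℤ) : ℂ) * 3) * (mul_inv_cancel₀ hn1)
    rw [hsplit, Complex.exp_add, Complex.exp_int_mul_two_pi_mul_I, mul_one]
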